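/- arXiv:2403.02317 — 2 statements merged into one kernel-verified Lean document; each statement's English description precedes it below -/
import Mathlib

section
/- For a box with cost $c > 0$, prizes with probabilities $p_j$ and affine agent values $v_j(\alpha) = a_j + \alpha b_j$ with $a_j, b_j \geq 0$, the fair cap function $\varphi : [0,1] \to \mathbb{R}$ defined by $\sum_j p_j \max\{0, v_j(\alpha) - \varphi(\alpha)\} = c$ is monotone non-decreasing and convex. -/
open Finset

/-- the fair cap `φ(α)` of a box under a linear contract is monotone
non-decreasing and convex on `[0,1]`. -/
theorem fair_cap_monotone_convex (m : ℕ) (p a b : Fin m → ℝ)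
    (hp : ∀ j, 0 ≤ p j) (hpsum : ∑ j, p j = 1)
    (ha : ∀ j, 0 ≤ a j) (hb : ∀ j, 0 ≤ b j)
    (c : ℝ) (hc : 0 < c) (φ : ℝ → ℝ)
    (hfair : ∀ α ∈ Set.Icc (0:ℝ) 1, ∑ j, p j * max 0 (a j + α * b j - φ α) = c) :
    MonotoneOn φ (Set.Icc (0:ℝ) 1) ∧ ConvexOn ℝ (Set.Icc (0:ℝ) 1) φ := by
  -- Key lemma: if the sum with cap `t` is at most `c`, then `φ α ≤ t`.
  have key : ∀ α ∈ Set.Icc (0:ℝ) 1, ∀ t : ℝ,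
      (∑ j, p j * max 0 (a j + α * b j - t)) ≤ c → φ α ≤ t := by
    intro α hα t ht
    by_contra h
    push_neg at h
    have hfc := hfair α hα
    have hex : ∃ j, 0 < p j * max 0 (a j + α * b j - φ α) := by
      by_contra hno
      push_neg at hno
      have hle : ∑ j, p j * max 0 (a j + α * b j - φ α) ≤ 0 :=
        Finset.sum_nonpos (fun j _ => hno j)
      linarith
    obtain ⟨j, hj⟩ := hex
    have hmaxj : 0 < max 0 (a j + α * b j - φ α) := by
      rcases (max_choice 0 (a j + α * b j - φ α)) with h0 | h0
      · rw [h0] at hj; simp at hj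
      · rw [h0] at hj ⊢
        nlinarith [hp j, le_max_right 0 (a j + α * b j - φ α), h0]
    have hvj : 0 < a j + α * b j - φ α := by
      rcases le_or_gt (a j + α * b j - φ α) 0 with h' | h'
      · rw [max_eq_left h'] at hmaxj; exact absurd hmaxj (lt_irrefl 0)
      · exact h'
    have hpj : 0 < p j := by
      rcases lt_or_eq_of_le (hp j) with h' | h'
      · exact h'
      · rw [← h'] at hj; simp at hj
    have hstrict : ∑ j, p j * max 0 (a j + α * b j - φ α)
        < ∑ j, p j * max 0 (a j + α * b j - t) := by
      apply Finset.sum_lt_sum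
      · intro i _
        exact mul_le_mul_of_nonneg_left (max_le_max le_rfl (by linarith)) (hp i)
      · refine ⟨j, Finset.mem_univ j, ?_⟩
        apply mul_lt_mul_of_pos_left _ hpj
        have h1 : max 0 (a j + α * b j - φ α) = a j + α * b j - φ α :=
          max_eq_right (le_of_lt hvj)
        have h2 : a j + α * b j - t ≤ max 0 (a j + α * b j - t) := le_max_right _ _
        rw [h1]; linarith
    linarith
  constructor
  · -- monotone
    intro x hx y hy hxy
    apply key x hx (φ y)
    rw [← hfair y hy]
    apply Finset.sum_le_sum
    intro i _
    apply mul_le_mul_of_nonneg_left _ (hp i)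
    apply max_le_max le_rfl
    have : x * b i ≤ y * b i := mul_le_mul_of_nonneg_right hxy (hb i)
    linarith
  · -- convex
    refine ⟨convex_Icc 0 1, ?_⟩
    intro x hx y hy s t hs ht hst
    simp only [smul_eq_mul]
    have hz : s * x + t * y ∈ Set.Icc (0:ℝ) 1 := by
      have := (convex_Icc (0:ℝ) 1) hx hy hs ht hst
      simpa using this
    apply key _ hz
    have step : ∀ i : Fin m,
        p i * max 0 (a i + (s * x + t * y) * b i - (s * φ x + t * φ y))
          ≤ p i * (s * max 0 (a i + x * b i - φ x) + t * max 0 (a i + y * b i - φ y)) := by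
      intro i
      apply mul_le_mul_of_nonneg_left _ (hp i)
      apply max_le
      · have h1 : 0 ≤ s * max 0 (a i + x * b i - φ x) :=
          mul_nonneg hs (le_max_left _ _)
        have h2 : 0 ≤ t * max 0 (a i + y * b i - φ y) :=
          mul_nonneg ht (le_max_left _ _)
        linarith
      · have h1 : s * (a i + x * b i - φ x) ≤ s * max 0 (a i + x * b i - φ x) :=
          mul_le_mul_of_nonneg_left (le_max_right _ _) hs
        have h2 : t * (a i + y * b i - φ y) ≤ t * max 0 (a i + y * b i - φ y) :=
          mul_le_mul_of_nonneg_left (le_max_right _ _) ht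
        have heq : a i + (s * x + t * y) * b i - (s * φ x + t * φ y)
            = s * (a i + x * b i - φ x) + t * (a i + y * b i - φ y) := by
          have hs1 : s = 1 - t := by linarith
          rw [hs1]; ring
        linarith
    calc ∑ j, p j * max 0 (a j + (s * x + t * y) * b j - (s * φ x + t * φ y))
        ≤ ∑ j, p j * (s * max 0 (a j + x * b j - φ x) + t * max 0 (a j + y * b j - φ y)) :=
          Finset.sum_le_sum (fun i _ => step i)
      _ = s * (∑ j, p j * max 0 (a j + x * b j - φ x))
            + t * (∑ j, p j * max 0 (a j + y * b j - φ y)) := by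
          rw [Finset.mul_sum, Finset.mul_sum, ← Finset.sum_add_distrib]
          exact Finset.sum_congr rfl (fun i _ => by ring)
      _ = s * c + t * c := by rw [hfair x hx, hfair y hy]
      _ ≤ c := by nlinarith [hst]
end

section
/- Under the same setup, the fair cap function $\varphi : [0,1] \to \mathbb{R}$ is piecewise linear with at most $2m+1$ affine segments; equivalently, the set of breakpoints of $\varphi$ on $[0,1]$ has cardinality at most $2m$. -/
open Finset

/-- the fair cap `φ(α)` is piecewise linear on `[0,1]` with at most
`2m+1` affine segments, i.e., at most `2m` breakpoints. -/
theorem fair_cap_piecewise_linear_segments (m : ℕ) (p a b : Fin m → ℝ)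
    (hp : ∀ j, 0 ≤ p j) (hpsum : ∑ j, p j = 1)
    (ha : ∀ j, 0 ≤ a j) (hb : ∀ j, 0 ≤ b j)
    (c : ℝ) (hc : 0 < c) (φ : ℝ → ℝ)
    (hfair : ∀ α ∈ Set.Icc (0:ℝ) 1, ∑ j, p j * max 0 (a j + α * b j - φ α) = c) :
    ∃ s : Finset ℝ, s.card ≤ 2 * m ∧
      ∀ x y : ℝ, x ∈ Set.Icc (0:ℝ) 1 → y ∈ Set.Icc (0:ℝ) 1 → x < y →
        (∀ z ∈ s, z ∉ Set.Ioo x y) →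
        ∃ A B : ℝ, ∀ t ∈ Set.Icc x y, φ t = A * t + B := by
  classical
  -- notation
  set P : Finset (Fin m) → ℝ := fun J => ∑ j ∈ J, p j with hPdef
  set L : Finset (Fin m) → ℝ → ℝ := fun J α =>
    ((∑ j ∈ J, p j * a j) + α * (∑ j ∈ J, p j * b j) - c) / P J with hLdef
  set 𝒥 : Finset (Finset (Fin m)) := univ.filter (fun J => 0 < P J) with h𝒥def
  have hPuniv : P univ = 1 := hpsum
  have h𝒥 : 𝒥.Nonempty := ⟨univ, by simp [h𝒥def, hPuniv]⟩
  set g : ℝ → ℝ := fun α => 𝒥.sup' h𝒥 (fun J => L J α) with hgdef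
  have hsum : ∀ (J : Finset (Fin m)) (α : ℝ),
      ∑ j ∈ J, p j * (a j + α * b j - φ α)
        = (∑ j ∈ J, p j * a j) + α * (∑ j ∈ J, p j * b j) - P J * φ α := by
    intro J α
    simp only [hPdef]
    rw [Finset.mul_sum, Finset.sum_mul, ← Finset.sum_add_distrib, ← Finset.sum_sub_distrib]
    exact Finset.sum_congr rfl fun j _ => by ring
  -- lower bound : every L J is below φ on [0,1]
  have hlow : ∀ J ∈ 𝒥, ∀ α ∈ Set.Icc (0:ℝ) 1, L J α ≤ φ α := by
    intro J hJ α hα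
    have hPJ : 0 < P J := (Finset.mem_filter.1 hJ).2
    by_contra hcon
    push_neg at hcon
    have hc' := hfair α hα
    have h1 : ∑ j ∈ J, p j * max 0 (a j + α * b j - φ α) ≤ c := by
      rw [← hc']
      apply Finset.sum_le_sum_of_subset_of_nonneg (Finset.subset_univ J)
      intro i _ _
      exact mul_nonneg (hp i) (le_max_left _ _)
    have h2 : ∑ j ∈ J, p j * (a j + α * b j - φ α)
        ≤ ∑ j ∈ J, p j * max 0 (a j + α * b j - φ α) :=
      Finset.sum_le_sum fun i _ => mul_le_mul_of_nonneg_left (le_max_right _ _) (hp i)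
    rw [hsum J α] at h2
    have h4 : φ α * P J < (∑ j ∈ J, p j * a j) + α * (∑ j ∈ J, p j * b j) - c := by
      have hcon' := hcon
      simp only [hLdef] at hcon'
      exact (lt_div_iff₀ hPJ).1 hcon'
    nlinarith
  -- active set representation
  have hact : ∀ α ∈ Set.Icc (0:ℝ) 1,
      (univ.filter (fun j => φ α < a j + α * b j)) ∈ 𝒥 ∧
      φ α = L (univ.filter (fun j => φ α < a j + α * b j)) α := by
    intro α hα
    have hc' := hfair α hα
    set J := univ.filter (fun j => φ α < a j + α * b j) with hJdef
    have hsplit : ∑ j, p j * max 0 (a j + α * b j - φ α)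
        = ∑ j ∈ J, p j * (a j + α * b j - φ α) := by
      rw [← Finset.sum_filter_add_sum_filter_not univ (fun j => φ α < a j + α * b j)
        (fun j => p j * max 0 (a j + α * b j - φ α))]
      have hzero : ∑ j ∈ univ.filter (fun j => ¬ φ α < a j + α * b j),
          p j * max 0 (a j + α * b j - φ α) = 0 := by
        apply Finset.sum_eq_zero
        intro j hj
        have hj2 := (Finset.mem_filter.1 hj).2
        push_neg at hj2
        rw [max_eq_left (by linarith), mul_zero]
      have hpos : ∑ j ∈ J, p j * max 0 (a j + α * b j - φ α)
          = ∑ j ∈ J, p j * (a j + α * b j - φ α) := by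
        apply Finset.sum_congr rfl
        intro j hj
        have hj2 := (Finset.mem_filter.1 hj).2
        rw [max_eq_right (by linarith)]
      rw [hzero, hpos, add_zero]
    rw [hsplit, hsum J α] at hc'
    have hPJ : 0 < P J := by
      rcases lt_or_eq_of_le (Finset.sum_nonneg fun j _ => hp j : 0 ≤ P J) with h | h
      · exact h
      · exfalso
        have hall : ∀ j ∈ J, p j = 0 := by
          intro j hj
          have := (Finset.sum_eq_zero_iff_of_nonneg (fun j _ => hp j)).1 h.symm
          exact this j hj
        have hz1 : (∑ j ∈ J, p j * a j) = 0 :=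
          Finset.sum_eq_zero fun j hj => by rw [hall j hj, zero_mul]
        have hz2 : (∑ j ∈ J, p j * b j) = 0 :=
          Finset.sum_eq_zero fun j hj => by rw [hall j hj, zero_mul]
        rw [hz1, hz2] at hc'
        rw [show P J = 0 from h.symm] at hc'
        simp at hc'
        linarith
    constructor
    · exact Finset.mem_filter.2 ⟨Finset.mem_univ _, hPJ⟩
    · simp only [hLdef]
      rw [eq_div_iff (ne_of_gt hPJ)]
      linarith
  -- φ = g on [0,1]
  have hφg : ∀ α ∈ Set.Icc (0:ℝ) 1, φ α = g α := by
    intro α hα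
    refine le_antisymm ?_ ?_
    · obtain ⟨hmem, heq⟩ := hact α hα
      rw [heq, hgdef]
      exact Finset.le_sup' (fun J => L J α) hmem
    · exact Finset.sup'_le _ _ fun J hJ => hlow J hJ α hα
  -- the "active intervals"
  set I : Fin m → Set ℝ := fun j => {α | α ∈ Set.Icc (0:ℝ) 1 ∧ g α < a j + α * b j}
    with hIdef
  have hImem : ∀ j α, α ∈ I j ↔ (α ∈ Set.Icc (0:ℝ) 1 ∧ g α < a j + α * b j) := by
    intro j α; rw [hIdef]; rfl
  -- each I j is order-connected
  have hIconv : ∀ j u v w, u ≤ v → v ≤ w → u ∈ I j → w ∈ I j → v ∈ I j := by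
    intro j u v w huv hvw hu hw
    rw [hImem] at hu hw ⊢
    obtain ⟨hu1, hu2⟩ := hu
    obtain ⟨hw1, hw2⟩ := hw
    refine ⟨⟨le_trans hu1.1 huv, le_trans hvw hw1.2⟩, ?_⟩
    obtain ⟨J₁, hJ₁mem, hJ₁⟩ := Finset.exists_mem_eq_sup' h𝒥 (fun J => L J v)
    have hgv : g v = L J₁ v := hJ₁
    rw [hgv]
    have hPJ : 0 < P J₁ := (Finset.mem_filter.1 hJ₁mem).2
    have h1 : L J₁ u < a j + u * b j :=
      lt_of_le_of_lt (Finset.le_sup' (fun J => L J u) hJ₁mem) hu2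
    have h2 : L J₁ w < a j + w * b j :=
      lt_of_le_of_lt (Finset.le_sup' (fun J => L J w) hJ₁mem) hw2
    simp only [hLdef] at h1 h2 ⊢
    rw [div_lt_iff₀ hPJ] at h1 h2 ⊢
    rcases eq_or_lt_of_le hvw with rfl | hvw'
    · exact h2
    · have hwu : 0 < w - u := by linarith
      have k1 : (w - v) * ((∑ j ∈ J₁, p j * a j) + u * (∑ j ∈ J₁, p j * b j) - c)
          < (w - v) * ((a j + u * b j) * P J₁) :=
        mul_lt_mul_of_pos_left h1 (by linarith)
      have k2 : (v - u) * ((∑ j ∈ J₁, p j * a j) + w * (∑ j ∈ J₁, p j * b j) - c)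
          ≤ (v - u) * ((a j + w * b j) * P J₁) :=
        mul_le_mul_of_nonneg_left h2.le (by linarith)
      have key : (w - u) * ((∑ j ∈ J₁, p j * a j) + v * (∑ j ∈ J₁, p j * b j) - c)
          < (w - u) * ((a j + v * b j) * P J₁) := by nlinarith
      exact lt_of_mul_lt_mul_left key hwu.le
  -- continuity of g
  have hgcont : Continuous g := by
    rw [hgdef]
    apply Continuous.finset_sup'_apply h𝒥
    intro J _
    simp only [hLdef]
    exact (((continuous_const.add (continuous_id.mul continuous_const)).sub
      continuous_const).div_const _)
  -- the breakpoint set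
  refine ⟨(univ.image fun j : Fin m => sInf (I j)) ∪ (univ.image fun j : Fin m => sSup (I j)),
    ?_, ?_⟩
  · calc ((univ.image fun j : Fin m => sInf (I j)) ∪
        (univ.image fun j : Fin m => sSup (I j))).card
        ≤ (univ.image fun j : Fin m => sInf (I j)).card
          + (univ.image fun j : Fin m => sSup (I j)).card := Finset.card_union_le _ _
      _ ≤ m + m := by
          gcongr <;> exact Finset.card_image_le.trans (by simp)
      _ = 2 * m := by ring
  · intro x y hx hy hxy hs
    have hIooIcc : Set.Ioo x y ⊆ Set.Icc (0:ℝ) 1 := fun t ht =>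
      ⟨le_trans hx.1 ht.1.le, le_trans ht.2.le hy.2⟩
    have hα₀ : (x + y) / 2 ∈ Set.Ioo x y := ⟨by linarith, by linarith⟩
    set α₀ : ℝ := (x + y) / 2 with hα₀def
    -- membership in I j is constant on Ioo x y
    have hsame : ∀ j : Fin m, ∀ α ∈ Set.Ioo x y, ∀ β ∈ Set.Ioo x y, α ∈ I j → β ∈ I j := by
      intro j α hα β hβ hαI
      by_contra hβI
      have hBddA : BddAbove (I j) := ⟨1, fun w hw => ((hImem j w).1 hw).1.2⟩
      have hBddB : BddBelow (I j) := ⟨0, fun w hw => ((hImem j w).1 hw).1.1⟩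
      rcases lt_trichotomy α β with h | h | h
      · have hsub : ∀ w ∈ I j, w < β := by
          intro w hwI
          by_contra hwge
          push_neg at hwge
          exact hβI (hIconv j α β w h.le hwge hαI hwI)
        have h1 : sSup (I j) ≤ β := csSup_le ⟨α, hαI⟩ fun w hw => (hsub w hw).le
        have h2 : α ≤ sSup (I j) := le_csSup hBddA hαI
        have hmem : sSup (I j) ∈ Set.Ioo x y :=
          ⟨lt_of_lt_of_le hα.1 h2, lt_of_le_of_lt h1 hβ.2⟩
        exact hs _ (Finset.mem_union.2 (Or.inr (Finset.mem_image.2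
          ⟨j, Finset.mem_univ j, rfl⟩))) hmem
      · exact hβI (h ▸ hαI)
      · have hsub : ∀ w ∈ I j, β < w := by
          intro w hwI
          by_contra hwle
          push_neg at hwle
          exact hβI (hIconv j w β α hwle h.le hwI hαI)
        have h1 : β ≤ sInf (I j) := le_csInf ⟨α, hαI⟩ fun w hw => (hsub w hw).le
        have h2 : sInf (I j) ≤ α := csInf_le hBddB hαI
        have hmem : sInf (I j) ∈ Set.Ioo x y :=
          ⟨lt_of_lt_of_le hβ.1 h1, lt_of_le_of_lt h2 hα.2⟩
        exact hs _ (Finset.mem_union.2 (Or.inl (Finset.mem_image.2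
          ⟨j, Finset.mem_univ j, rfl⟩))) hmem
    set J₀ : Finset (Fin m) := univ.filter (fun j => φ α₀ < a j + α₀ * b j) with hJ₀def
    have hα₀Icc : α₀ ∈ Set.Icc (0:ℝ) 1 := hIooIcc hα₀
    have hJ₀ := hact α₀ hα₀Icc
    have hconst : ∀ α ∈ Set.Ioo x y, univ.filter (fun j => φ α < a j + α * b j) = J₀ := by
      intro α hα
      rw [hJ₀def]
      ext j
      simp only [Finset.mem_filter, Finset.mem_univ, true_and]
      have hIiff : ∀ γ, γ ∈ Set.Ioo x y → ((φ γ < a j + γ * b j) ↔ γ ∈ I j) := by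
        intro γ hγ
        rw [hImem, hφg γ (hIooIcc hγ)]
        exact ⟨fun h => ⟨hIooIcc hγ, h⟩, fun h => h.2⟩
      rw [hIiff α hα, hIiff α₀ hα₀]
      exact ⟨fun h => hsame j α hα α₀ hα₀ h, fun h => hsame j α₀ hα₀ α hα h⟩
    have hJ₀mem : J₀ ∈ 𝒥 := hJ₀.1
    have hPJ₀ : 0 < P J₀ := (Finset.mem_filter.1 hJ₀mem).2
    refine ⟨(∑ j ∈ J₀, p j * b j) / P J₀, ((∑ j ∈ J₀, p j * a j) - c) / P J₀, ?_⟩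
    have haff : ∀ α : ℝ, L J₀ α
        = (∑ j ∈ J₀, p j * b j) / P J₀ * α + ((∑ j ∈ J₀, p j * a j) - c) / P J₀ := by
      intro α
      simp only [hLdef]
      field_simp
      ring
    have hEqIoo : Set.EqOn g
        (fun t => (∑ j ∈ J₀, p j * b j) / P J₀ * t + ((∑ j ∈ J₀, p j * a j) - c) / P J₀)
        (Set.Ioo x y) := by
      intro α hα
      have h1 := (hact α (hIooIcc hα)).2
      rw [hconst α hα] at h1
      simp only
      rw [← hφg α (hIooIcc hα), h1, haff]
    have hEqIcc : Set.EqOn g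
        (fun t => (∑ j ∈ J₀, p j * b j) / P J₀ * t + ((∑ j ∈ J₀, p j * a j) - c) / P J₀)
        (Set.Icc x y) := by
      have := hEqIoo.closure hgcont
        ((continuous_const.mul continuous_id).add continuous_const)
      rwa [closure_Ioo hxy.ne] at this
    intro t ht
    have htIcc : t ∈ Set.Icc (0:ℝ) 1 := ⟨le_trans hx.1 ht.1, le_trans ht.2 hy.2⟩
    rw [hφg t htIcc]
    exact hEqIcc ht
end
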